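/- In any majority dominator coloring of the path P_n using the minimum number χ_md(P_n) of colors, at most two colors appear on at least five vertices each. -/
import Mathlib

open SimpleGraph

/-- A majority dominator coloring: a proper coloring such that every vertex `v`
dominates at least half of some (nonempty) color class, i.e. there is a color class `C`
with `|C| ≤ 2 * |C ∩ N[v]|`. -/
def SimpleGraph.IsMajorityDominatorColoring {V : Type*} (G : SimpleGraph V) {k : ℕ}
    (c : V → Fin k) : Prop :=
  (∀ u v, G.Adj u v → c u ≠ c v) ∧
  ∀ v : V, ∃ i : Fin k,
    {u | c u = i}.Nonempty ∧
    {u | c u = i}.ncard ≤ 2 * {u | c u = i ∧ (u = v ∨ G.Adj v u)}.ncard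

/-- The majority dominator chromatic number. -/
noncomputable def SimpleGraph.majorityDominatorChromaticNumber {V : Type*}
    (G : SimpleGraph V) : ℕ :=
  sInf {k | ∃ c : V → Fin k, G.IsMajorityDominatorColoring c}

/-- Any class that majority-dominates some vertex of the path has at most 4 elements. -/
lemma dom_class_le_four {n k : ℕ} (c : Fin n → Fin k)
    (hprop : ∀ u v, (pathGraph n).Adj u v → c u ≠ c v)
    (v : Fin n) (i : Fin k)
    (hdom : {u | c u = i}.ncard ≤ 2 * {u | c u = i ∧ (u = v ∨ (pathGraph n).Adj v u)}.ncard) :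
    {u | c u = i}.ncard ≤ 4 := by
  have hD : {u | c u = i ∧ (u = v ∨ (pathGraph n).Adj v u)}.ncard ≤ 2 := by
    by_cases hv : c v = i
    · have hsub : {u | c u = i ∧ (u = v ∨ (pathGraph n).Adj v u)} ⊆ {v} := by
        rintro u ⟨hu, h | h⟩
        · exact h
        · exact absurd hu (fun hu' => hprop v u h (by rw [hv, hu']))
      calc {u | c u = i ∧ (u = v ∨ (pathGraph n).Adj v u)}.ncard
          ≤ ({v} : Set (Fin n)).ncard :=
            Set.ncard_le_ncard hsub (Set.finite_singleton v)
        _ ≤ 2 := by simp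
    · have h2 : {u | c u = i ∧ (u = v ∨ (pathGraph n).Adj v u)}.ncard ≤
          (Set.univ : Set (Fin 2)).ncard := by
        apply Set.ncard_le_ncard_of_injOn (fun u => if u.val < v.val then 0 else 1)
        · intro u _; trivial
        · rintro a ⟨ha, ha'⟩ b ⟨hb, hb'⟩ hab
          have ha2 : (pathGraph n).Adj v a := by
            rcases ha' with h | h
            · exact absurd (h ▸ ha) hv
            · exact h
          have hb2 : (pathGraph n).Adj v b := by
            rcases hb' with h | h
            · exact absurd (h ▸ hb) hv
            · exact h
          rw [pathGraph_adj] at ha2 hb2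
          simp only at hab
          apply Fin.ext
          split_ifs at hab with h1 h2 h2
          all_goals omega
      have : (Set.univ : Set (Fin 2)).ncard = 2 := by
        rw [Set.ncard_univ]; simp
      omega
  omega

theorem path_md_coloring_at_most_two_big_classes (n k : ℕ)
    (hk : k = (pathGraph n).majorityDominatorChromaticNumber)
    (c : Fin n → Fin k) (hc : (pathGraph n).IsMajorityDominatorColoring c) :
    {i : Fin k | 5 ≤ {u | c u = i}.ncard}.ncard ≤ 2 := by
  by_contra hbig
  push_neg at hbig
  obtain ⟨i, hi, j, hj, l, hl, hij, hil, hjl⟩ :=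
    (Set.two_lt_ncard (Set.toFinite _)).mp hbig
  simp only [Set.mem_setOf_eq] at hi hj hl
  -- recolor the three big classes by parity using only colors i and j
  set c' : Fin n → Fin k := fun u =>
    if c u = i ∨ c u = j ∨ c u = l then (if u.val % 2 = 0 then i else j) else c u with hc'def
  have hprop' : ∀ u w, (pathGraph n).Adj u w → c' u ≠ c' w := by
    intro u w huw
    have hpar : u.val % 2 ≠ w.val % 2 := by
      rw [pathGraph_adj] at huw; omega
    simp only [hc'def]
    by_cases hu : c u = i ∨ c u = j ∨ c u = l <;>
      by_cases hw : c w = i ∨ c w = j ∨ c w = l <;> simp only [hu, hw, if_true, if_false,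
        if_pos, if_neg, not_false_iff]
    · split_ifs with h1 h2 h2
      · omega
      · exact hij
      · exact hij.symm
      · omega
    · split_ifs with h1
      · rintro h; exact hw (Or.inl h.symm)
      · rintro h; exact hw (Or.inr (Or.inl h.symm))
    · split_ifs with h1
      · intro h; exact hu (Or.inl h)
      · intro h; exact hu (Or.inr (Or.inl h))
    · exact hc.1 u w huw
  -- any small class is untouched by the recoloring
  have hsame : ∀ a : Fin k, {u | c u = a}.ncard ≤ 4 → ∀ u, (c' u = a ↔ c u = a) := by
    intro a ha u
    have hai : a ≠ i := fun h => by rw [h] at ha; omega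
    have haj : a ≠ j := fun h => by rw [h] at ha; omega
    have hal : a ≠ l := fun h => by rw [h] at ha; omega
    simp only [hc'def]
    by_cases hu : c u = i ∨ c u = j ∨ c u = l
    · simp only [hu, if_true]
      constructor
      · intro h
        split_ifs at h
        · exact absurd h.symm hai
        · exact absurd h.symm haj
      · intro h
        rcases hu with h' | h' | h'
        · exact absurd (h' ▸ h) hai.symm
        · exact absurd (h' ▸ h) haj.symm
        · exact absurd (h' ▸ h) hal.symm
    · simp [hu]
  -- c' is a majority dominator coloring
  have hmd' : (pathGraph n).IsMajorityDominatorColoring c' := by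
    refine ⟨hprop', fun v => ?_⟩
    obtain ⟨a, hne, hdom⟩ := hc.2 v
    have ha4 : {u | c u = a}.ncard ≤ 4 := dom_class_le_four c hc.1 v a hdom
    have hs := hsame a ha4
    have e1 : {u | c' u = a} = {u | c u = a} := by ext u; exact hs u
    have e2 : {u | c' u = a ∧ (u = v ∨ (pathGraph n).Adj v u)} =
        {u | c u = a ∧ (u = v ∨ (pathGraph n).Adj v u)} := by
      ext u; exact and_congr_left' (hs u)
    exact ⟨a, e1 ▸ hne, by rw [e1, e2]; exact hdom⟩
  -- color l is unused by c'
  have hlne : ∀ u, c' u ≠ l := by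
    intro u
    simp only [hc'def]
    by_cases hu : c u = i ∨ c u = j ∨ c u = l
    · simp only [hu, if_true]
      split_ifs
      · exact hil
      · exact hjl
    · simp only [hu, if_false]
      intro h; exact hu (Or.inr (Or.inr h))
  -- compress to k - 1 colors
  obtain ⟨m, rfl⟩ : ∃ m, k = m + 1 := ⟨k - 1, (Nat.succ_pred_eq_of_pos l.pos).symm⟩
  set e := finSuccAboveEquiv l with he
  set c'' : Fin n → Fin m := fun u => e.symm ⟨c' u, hlne u⟩ with hc''def
  have hcc : ∀ u (a : Fin m), c'' u = a ↔ c' u = (e a).1 := by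
    intro u a
    simp only [hc''def]
    rw [Equiv.symm_apply_eq]
    constructor
    · intro h; rw [← h]
    · intro h; exact Subtype.ext h
  have hmd'' : (pathGraph n).IsMajorityDominatorColoring c'' := by
    constructor
    · intro u w huw h
      apply hprop' u w huw
      have := congrArg (fun x => (e x).1) h
      simpa [hc''def] using this
    · intro v
      obtain ⟨a, hne, hdom⟩ := hmd'.2 v
      have hal : a ≠ l := fun h => hlne hne.choose (h ▸ hne.choose_spec)
      refine ⟨e.symm ⟨a, hal⟩, ?_, ?_⟩
      · have : ∀ u, c'' u = e.symm ⟨a, hal⟩ ↔ c' u = a := by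
          intro u
          rw [hcc u (e.symm ⟨a, hal⟩)]
          simp
        obtain ⟨u, hu⟩ := hne
        exact ⟨u, (this u).mpr hu⟩
      · have hbij : ∀ u, c'' u = e.symm ⟨a, hal⟩ ↔ c' u = a := by
          intro u
          rw [hcc u (e.symm ⟨a, hal⟩)]
          simp
        have e1 : {u | c'' u = e.symm ⟨a, hal⟩} = {u | c' u = a} := by
          ext u; exact hbij u
        have e2 : {u | c'' u = e.symm ⟨a, hal⟩ ∧ (u = v ∨ (pathGraph n).Adj v u)} =
            {u | c' u = a ∧ (u = v ∨ (pathGraph n).Adj v u)} := by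
          ext u; exact and_congr_left' (hbij u)
        rw [e1, e2]; exact hdom
  -- contradiction with minimality
  have hmem : m ∈ {k' | ∃ c : Fin n → Fin k', (pathGraph n).IsMajorityDominatorColoring c} :=
    ⟨c'', hmd''⟩
  have := Nat.sInf_le hmem
  rw [SimpleGraph.majorityDominatorChromaticNumber] at hk
  omega
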